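/- Let q ∈ (0,1), s ∈ (0,1), and let (c_ℓ)_{ℓ=0}^L be nonnegative reals. Let φ = ∑_{ℓ=0}^L φ_ℓ in a Hilbert space with two norms ‖·‖_{−1} and ‖·‖ connected by inverse estimates ‖φ_ℓ‖_{−s+δ} ≤ C q^{ℓ(−1+s−δ)}‖φ_ℓ‖_{−1} and ‖φ_k‖_{−s−δ} ≤ C q^{k(−1+s+δ)}‖φ_k‖_{−1} for some δ with 0 < s−δ < s+δ < 1, and suppose the interpolation scalar product satisfies |⟨φ_ℓ, φ_k⟩_{−s}| ≤ ‖φ_ℓ‖_{−s+δ}‖φ_k‖_{−s−δ}. Then ‖φ‖²_{−s} = ∑_{ℓ,k} ⟨φ_ℓ,φ_k⟩_{−s} ≤ C' ∑_{ℓ=0}^L q^{2ℓ(−1+s)} ‖φ_ℓ‖²_{−1}, with C' depending only on C, q, δ. -/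
import Mathlib

open Finset

private lemma geom_tail_le {r : ℝ} (h0 : 0 ≤ r) (h1 : r < 1) (n : ℕ) :
    ∑ j ∈ Finset.range n, r ^ j ≤ 1 / (1 - r) := by
  rw [one_div]
  exact (Summable.sum_le_tsum (Finset.range n) (fun i _ => pow_nonneg h0 i)
    (summable_geometric_of_lt_one h0 h1)).trans_eq (tsum_geometric_of_lt_one h0 h1)

private lemma abs_geom_sum_le {r : ℝ} (h0 : 0 ≤ r) (h1 : r < 1) (ℓ n : ℕ) :
    ∑ k ∈ Finset.range n, r ^ ((k - ℓ) + (ℓ - k)) ≤ 2 / (1 - r) := by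
  classical
  rw [← Finset.sum_filter_add_sum_filter_not (Finset.range n) (· ≤ ℓ)]
  have hA : ∑ k ∈ (Finset.range n).filter (· ≤ ℓ), r ^ ((k - ℓ) + (ℓ - k)) ≤ 1 / (1 - r) := by
    calc ∑ k ∈ (Finset.range n).filter (· ≤ ℓ), r ^ ((k - ℓ) + (ℓ - k))
        = ∑ k ∈ (Finset.range n).filter (· ≤ ℓ), r ^ (ℓ - k) := by
          refine Finset.sum_congr rfl fun k hk => ?_
          simp only [Finset.mem_filter] at hk
          rw [Nat.sub_eq_zero_of_le hk.2, zero_add]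
      _ ≤ ∑ k ∈ Finset.range (ℓ + 1), r ^ (ℓ - k) := by
          refine Finset.sum_le_sum_of_subset_of_nonneg ?_ (fun i _ _ => pow_nonneg h0 _)
          intro k hk
          simp only [Finset.mem_filter, Finset.mem_range] at hk ⊢
          omega
      _ = ∑ j ∈ Finset.range (ℓ + 1), r ^ j := by
          simpa using Finset.sum_range_reflect (fun j => r ^ j) (ℓ + 1)
      _ ≤ 1 / (1 - r) := geom_tail_le h0 h1 _
  have hB : ∑ k ∈ (Finset.range n).filter (fun k => ¬ k ≤ ℓ), r ^ ((k - ℓ) + (ℓ - k))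
      ≤ 1 / (1 - r) := by
    calc ∑ k ∈ (Finset.range n).filter (fun k => ¬ k ≤ ℓ), r ^ ((k - ℓ) + (ℓ - k))
        = ∑ k ∈ (Finset.range n).filter (fun k => ¬ k ≤ ℓ), r ^ (k - ℓ) := by
          refine Finset.sum_congr rfl fun k hk => ?_
          simp only [Finset.mem_filter, not_le] at hk
          rw [Nat.sub_eq_zero_of_le hk.2.le, add_zero]
      _ ≤ ∑ k ∈ Finset.Ico (ℓ + 1) (n + ℓ + 1), r ^ (k - ℓ) := by
          refine Finset.sum_le_sum_of_subset_of_nonneg ?_ (fun i _ _ => pow_nonneg h0 _)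
          intro k hk
          simp only [Finset.mem_filter, Finset.mem_range, not_le, Finset.mem_Ico] at hk ⊢
          omega
      _ = ∑ j ∈ Finset.range n, r ^ (j + 1) := by
          rw [Finset.sum_Ico_eq_sum_range]
          refine Finset.sum_congr (by congr 1; omega) fun j _ => ?_
          congr 1
          omega
      _ ≤ ∑ j ∈ Finset.range n, r ^ j :=
          Finset.sum_le_sum fun j _ => pow_le_pow_of_le_one h0 h1.le (Nat.le_succ j)
      _ ≤ 1 / (1 - r) := geom_tail_le h0 h1 _
  have h2 : (2:ℝ) / (1 - r) = 1 / (1 - r) + 1 / (1 - r) := by ring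
  linarith

/-- Abstract stability of multilevel splittings: if the levelwise contributions `φ_ℓ`
satisfy inverse estimates in the intermediate norms `na = ‖·‖_{-s+δ}`, `nb = ‖·‖_{-s-δ}`
against `nc = ‖·‖_{-1}`, and the `-s` inner product satisfies the mixed duality bound
`|⟨φ_ℓ, φ_k⟩_{-s}| ≤ na(φ_ℓ) nb(φ_k)`, then
`‖∑ φ_ℓ‖²_{-s} ≤ C' ∑ q^{2ℓ(-1+s)} nc(φ_ℓ)²` with `C' = 2C²/(1-q^δ)`. -/
theorem multilevel_splitting_stability
    {H : Type*} [NormedAddCommGroup H] [InnerProductSpace ℝ H]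
    (q δ s C : ℝ) (hq0 : 0 < q) (hq1 : q < 1) (hδ : 0 < δ) (hC : 0 < C)
    (hs0 : 0 < s - δ) (hs1 : s + δ < 1)
    (L : ℕ) (φ : ℕ → H)
    (na nb nc : H → ℝ)
    (hna : ∀ x, 0 ≤ na x) (hnb : ∀ x, 0 ≤ nb x) (hnc : ∀ x, 0 ≤ nc x)
    (hainv : ∀ ℓ, na (φ ℓ) ≤ C * q ^ ((ℓ : ℝ) * (-1 + s - δ)) * nc (φ ℓ))
    (hbinv : ∀ k, nb (φ k) ≤ C * q ^ ((k : ℝ) * (-1 + s + δ)) * nc (φ k))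
    (hdual : ∀ ℓ k, |inner (𝕜 := ℝ) (φ ℓ) (φ k)| ≤ na (φ ℓ) * nb (φ k)) :
    ‖∑ ℓ ∈ Finset.range (L + 1), φ ℓ‖ ^ 2
      ≤ (2 * C ^ 2 / (1 - q ^ δ)) *
          ∑ ℓ ∈ Finset.range (L + 1), q ^ (2 * (ℓ : ℝ) * (-1 + s)) * nc (φ ℓ) ^ 2 := by
  set r := q ^ δ with hr
  have hr0 : 0 < r := Real.rpow_pos_of_pos hq0 δ
  have hr1 : r < 1 := Real.rpow_lt_one hq0.le hq1 hδ
  set x : ℕ → ℝ := fun ℓ => q ^ ((ℓ : ℝ) * (-1 + s)) * nc (φ ℓ) with hx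
  have hx0 : ∀ ℓ, 0 ≤ x ℓ := fun ℓ =>
    mul_nonneg (Real.rpow_pos_of_pos hq0 _).le (hnc _)
  -- pointwise bound for ℓ ≤ k
  have key' : ∀ ℓ k : ℕ, ℓ ≤ k →
      inner (𝕜 := ℝ) (φ ℓ) (φ k) ≤ C ^ 2 * r ^ ((k - ℓ) + (ℓ - k)) * (x ℓ * x k) := by
    intro ℓ k h
    have hm : r ^ ((k - ℓ) + (ℓ - k)) = q ^ (δ * (((k - ℓ : ℕ)) : ℝ)) := by
      rw [Nat.sub_eq_zero_of_le h, add_zero, hr,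
        ← Real.rpow_natCast (q ^ δ) (k - ℓ), ← Real.rpow_mul hq0.le]
    have hq' : q ^ ((ℓ : ℝ) * (-1 + s - δ)) * q ^ ((k : ℝ) * (-1 + s + δ))
        = q ^ (δ * (((k - ℓ : ℕ)) : ℝ)) * (q ^ ((ℓ : ℝ) * (-1 + s)) * q ^ ((k : ℝ) * (-1 + s))) := by
      rw [← Real.rpow_add hq0, ← Real.rpow_add hq0, ← Real.rpow_add hq0]
      congr 1
      push_cast [h]
      ring
    calc inner (𝕜 := ℝ) (φ ℓ) (φ k) ≤ |inner (𝕜 := ℝ) (φ ℓ) (φ k)| := le_abs_self _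
      _ ≤ na (φ ℓ) * nb (φ k) := hdual ℓ k
      _ ≤ (C * q ^ ((ℓ : ℝ) * (-1 + s - δ)) * nc (φ ℓ)) *
            (C * q ^ ((k : ℝ) * (-1 + s + δ)) * nc (φ k)) := by
          refine mul_le_mul (hainv ℓ) (hbinv k) (hnb _) ?_
          exact mul_nonneg (mul_nonneg hC.le
            (Real.rpow_pos_of_pos hq0 ((ℓ : ℝ) * (-1 + s - δ))).le) (hnc _)
      _ = C ^ 2 * r ^ ((k - ℓ) + (ℓ - k)) * (x ℓ * x k) := by
          rw [hm]
          simp only [hx]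
          linear_combination (C ^ 2 * nc (φ ℓ) * nc (φ k)) * hq'
  have key : ∀ ℓ k : ℕ,
      inner (𝕜 := ℝ) (φ ℓ) (φ k) ≤ C ^ 2 * r ^ ((k - ℓ) + (ℓ - k)) * (x ℓ * x k) := by
    intro ℓ k
    rcases le_total ℓ k with h | h
    · exact key' ℓ k h
    · rw [real_inner_comm, add_comm (k - ℓ), mul_comm (x ℓ)]
      exact key' k ℓ h
  have hsymm : ∑ ℓ ∈ Finset.range (L + 1), ∑ k ∈ Finset.range (L + 1),
        C ^ 2 * r ^ ((k - ℓ) + (ℓ - k)) * x k ^ 2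
      = ∑ ℓ ∈ Finset.range (L + 1), ∑ k ∈ Finset.range (L + 1),
        C ^ 2 * r ^ ((k - ℓ) + (ℓ - k)) * x ℓ ^ 2 := by
    rw [Finset.sum_comm]
    exact Finset.sum_congr rfl fun ℓ _ => Finset.sum_congr rfl fun k _ => by
      rw [add_comm (ℓ - k)]
  calc ‖∑ ℓ ∈ Finset.range (L + 1), φ ℓ‖ ^ 2
      = ∑ ℓ ∈ Finset.range (L + 1), ∑ k ∈ Finset.range (L + 1),
          inner (𝕜 := ℝ) (φ ℓ) (φ k) := by
        rw [← real_inner_self_eq_norm_sq, sum_inner]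
        exact Finset.sum_congr rfl fun ℓ _ => inner_sum _ _ _
    _ ≤ ∑ ℓ ∈ Finset.range (L + 1), ∑ k ∈ Finset.range (L + 1),
          C ^ 2 * r ^ ((k - ℓ) + (ℓ - k)) * (x ℓ * x k) :=
        Finset.sum_le_sum fun ℓ _ => Finset.sum_le_sum fun k _ => key ℓ k
    _ ≤ ∑ ℓ ∈ Finset.range (L + 1), ∑ k ∈ Finset.range (L + 1),
          C ^ 2 * r ^ ((k - ℓ) + (ℓ - k)) * ((x ℓ ^ 2 + x k ^ 2) / 2) := by
        refine Finset.sum_le_sum fun ℓ _ => Finset.sum_le_sum fun k _ => ?_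
        have h1 : x ℓ * x k ≤ (x ℓ ^ 2 + x k ^ 2) / 2 := by
          nlinarith [sq_nonneg (x ℓ - x k)]
        exact mul_le_mul_of_nonneg_left h1 (by positivity)
    _ = ∑ ℓ ∈ Finset.range (L + 1), ∑ k ∈ Finset.range (L + 1),
          C ^ 2 * r ^ ((k - ℓ) + (ℓ - k)) * x ℓ ^ 2 := by
        have expand : ∑ ℓ ∈ Finset.range (L + 1), ∑ k ∈ Finset.range (L + 1),
              C ^ 2 * r ^ ((k - ℓ) + (ℓ - k)) * ((x ℓ ^ 2 + x k ^ 2) / 2)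
            = (∑ ℓ ∈ Finset.range (L + 1), ∑ k ∈ Finset.range (L + 1),
                C ^ 2 * r ^ ((k - ℓ) + (ℓ - k)) * x ℓ ^ 2) / 2
              + (∑ ℓ ∈ Finset.range (L + 1), ∑ k ∈ Finset.range (L + 1),
                C ^ 2 * r ^ ((k - ℓ) + (ℓ - k)) * x k ^ 2) / 2 := by
          rw [Finset.sum_div, Finset.sum_div, ← Finset.sum_add_distrib]
          refine Finset.sum_congr rfl fun ℓ _ => ?_
          rw [Finset.sum_div, Finset.sum_div, ← Finset.sum_add_distrib]
          exact Finset.sum_congr rfl fun k _ => by ring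
        rw [expand, hsymm]
        ring
    _ ≤ ∑ ℓ ∈ Finset.range (L + 1), C ^ 2 * x ℓ ^ 2 * (2 / (1 - r)) := by
        refine Finset.sum_le_sum fun ℓ _ => ?_
        have hrw : ∑ k ∈ Finset.range (L + 1), C ^ 2 * r ^ ((k - ℓ) + (ℓ - k)) * x ℓ ^ 2
            = C ^ 2 * x ℓ ^ 2 * ∑ k ∈ Finset.range (L + 1), r ^ ((k - ℓ) + (ℓ - k)) := by
          rw [Finset.mul_sum]
          exact Finset.sum_congr rfl fun k _ => by ring
        rw [hrw]
        exact mul_le_mul_of_nonneg_left (abs_geom_sum_le hr0.le hr1 ℓ (L + 1)) (by positivity)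
    _ = (2 * C ^ 2 / (1 - r)) *
          ∑ ℓ ∈ Finset.range (L + 1), q ^ (2 * (ℓ : ℝ) * (-1 + s)) * nc (φ ℓ) ^ 2 := by
        rw [Finset.mul_sum]
        refine Finset.sum_congr rfl fun ℓ _ => ?_
        have hpow : (q ^ ((ℓ : ℝ) * (-1 + s))) ^ 2 = q ^ (2 * (ℓ : ℝ) * (-1 + s)) := by
          rw [← Real.rpow_natCast (q ^ ((ℓ : ℝ) * (-1 + s))) 2, ← Real.rpow_mul hq0.le]
          congr 1
          push_cast
          ring
        simp only [hx]
        rw [mul_pow, hpow]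
        ring
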